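/- Let n ∈ ℤ^d_{>0} be a velocity vector and let 0 < γ ≤ 1/2. Then the following are equivalent: (i) there exists β ∈ ℝ such that ‖β n_i‖_ℤ ≥ γ for every 1 ≤ i ≤ d; (ii) there exists a lattice point w ∈ int(Z(n)) ∩ ℤ^d such that w ∈ c_n + (1 − 2γ)(Z(n) − c_n), where c_n := (𝟙 + n)/2 and 𝟙 is the all-ones vector. -/

import Mathlib

open Pointwise

/-- A point of `ℝ^d` all of whose coordinates are integers. -/
def IsLatticePoint {d : ℕ} (x : Fin d → ℝ) : Prop := ∀ i, ∃ z : ℤ, x i = (z : ℝ)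

/-- The distance from a real number to the nearest integer. -/
noncomputable def distToInt (x : ℝ) : ℝ := |x - round x|

private lemma distToInt_add_int (x : ℝ) (k : ℤ) : distToInt (x + k) = distToInt x := by
  unfold distToInt
  rw [round_add_intCast]
  push_cast
  congr 1
  ring

private lemma fract_bounds {γ x : ℝ} (h : γ ≤ distToInt x) :
    γ ≤ Int.fract x ∧ Int.fract x ≤ 1 - γ := by
  unfold distToInt at h
  rw [abs_sub_round_eq_min, le_min_iff] at h
  exact ⟨h.1, by linarith [h.2]⟩

private lemma distToInt_ge {γ y : ℝ} (hγ0 : 0 < γ) (h1 : γ ≤ y) (h2 : y ≤ 1 - γ) :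
    γ ≤ distToInt y := by
  unfold distToInt
  rw [abs_sub_round_eq_min, Int.fract_eq_self.mpr ⟨by linarith, by linarith⟩]
  exact le_min h1 (by linarith)

private lemma bezout_aux {d : ℕ} (n : Fin d → ℤ) (x : ℝ)
    (h : ∀ i, ∃ z : ℤ, x * (n i : ℝ) = z) (s : Finset (Fin d)) :
    ∃ z : ℤ, x * ((s.gcd n : ℤ) : ℝ) = z := by
  induction s using Finset.induction with
  | empty => exact ⟨0, by simp⟩
  | @insert i s hi ih =>
    rw [Finset.gcd_insert]
    obtain ⟨u, v, huv⟩ := exists_gcd_eq_mul_add_mul (n i) (s.gcd n)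
    obtain ⟨z1, hz1⟩ := h i
    obtain ⟨z2, hz2⟩ := ih
    refine ⟨z1 * u + z2 * v, ?_⟩
    rw [huv]
    push_cast
    rw [mul_add, ← mul_assoc, ← mul_assoc, hz1, hz2]

private lemma mem_interior_Z {d : ℕ} (n : Fin d → ℤ) (Z : Set (Fin d → ℝ))
    (hZ : Z = (Set.range fun t : ℝ => t • (fun i => (n i : ℝ))) + Set.Icc (0 : Fin d → ℝ) 1)
    (w : Fin d → ℝ) (t : ℝ) (h : ∀ i, 0 < w i - t * (n i : ℝ) ∧ w i - t * (n i : ℝ) < 1) :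
    w ∈ interior Z := by
  rw [mem_interior]
  refine ⟨Set.pi Set.univ (fun i => Set.Ioo (t * (n i : ℝ)) (t * (n i : ℝ) + 1)), ?_,
    isOpen_set_pi Set.finite_univ (fun i _ => isOpen_Ioo), ?_⟩
  · intro x hx
    rw [hZ, Set.mem_add]
    refine ⟨t • (fun i => (n i : ℝ)), ⟨t, rfl⟩, x - t • (fun i => (n i : ℝ)), ?_, by abel⟩
    rw [Set.mem_Icc]
    constructor <;> intro i <;>
      · have := hx i (Set.mem_univ i)
        simp only [Set.mem_Ioo] at this
        simp only [Pi.sub_apply, Pi.smul_apply, Pi.zero_apply, Pi.one_apply, smul_eq_mul]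
        linarith [this.1, this.2]
  · rw [Set.mem_univ_pi]
    intro i
    exact ⟨by linarith [(h i).1], by linarith [(h i).2]⟩

private lemma mem_Z {d : ℕ} (n : Fin d → ℤ) (Z : Set (Fin d → ℝ))
    (hZ : Z = (Set.range fun t : ℝ => t • (fun i => (n i : ℝ))) + Set.Icc (0 : Fin d → ℝ) 1)
    (z : Fin d → ℝ) (t : ℝ) (h : ∀ i, 0 ≤ z i - t * (n i : ℝ) ∧ z i - t * (n i : ℝ) ≤ 1) :
    z ∈ Z := by
  rw [hZ, Set.mem_add]
  refine ⟨t • (fun i => (n i : ℝ)), ⟨t, rfl⟩, z - t • (fun i => (n i : ℝ)), ?_, by abel⟩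
  rw [Set.mem_Icc]
  constructor <;> intro i <;>
    · simp only [Pi.sub_apply, Pi.smul_apply, Pi.zero_apply, Pi.one_apply, smul_eq_mul]
      linarith [(h i).1, (h i).2]

theorem gap_of_loneliness_interpretation
    {d : ℕ} (hd : 2 ≤ d) (n : Fin d → ℤ) (hpos : ∀ i, 0 < n i)
    (hdist : Function.Injective n) (hgcd : Finset.univ.gcd n = 1)
    (γ : ℝ) (hγ0 : 0 < γ) (hγ : γ ≤ 1/2)
    (Z : Set (Fin d → ℝ))
    (hZ : Z = (Set.range fun t : ℝ => t • (fun i => (n i : ℝ))) + Set.Icc (0 : Fin d → ℝ) 1)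
    (c : Fin d → ℝ) (hc : c = fun i => (1 + (n i : ℝ)) / 2) :
    (∃ β : ℝ, ∀ i, γ ≤ distToInt (β * (n i : ℝ))) ↔
      (∃ w : Fin d → ℝ, w ∈ interior Z ∧ IsLatticePoint w ∧
        w ∈ ({c} : Set (Fin d → ℝ)) + (1 - 2 * γ) • (Z - {c})) := by
  constructor
  · rintro ⟨β, hβ⟩
    rcases lt_or_eq_of_le hγ with hlt | heq
    · -- γ < 1/2
      have h2 : (0:ℝ) < 1 - 2 * γ := by linarith
      set w : Fin d → ℝ := fun i => Int.fract (β * (n i : ℝ)) - β * (n i : ℝ) with hw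
      have hfr : ∀ i, γ ≤ Int.fract (β * (n i : ℝ)) ∧ Int.fract (β * (n i : ℝ)) ≤ 1 - γ :=
        fun i => fract_bounds (hβ i)
      refine ⟨w, ?_, ?_, ?_⟩
      · refine mem_interior_Z n Z hZ w (-β) (fun i => ?_)
        have := hfr i
        constructor <;> simp only [hw] <;> nlinarith [this.1, this.2]
      · intro i
        refine ⟨-⌊β * (n i : ℝ)⌋, ?_⟩
        simp only [hw]
        rw [← Int.self_sub_floor]
        push_cast
        ring
      · rw [Set.mem_add]
        refine ⟨c, rfl, w - c, ?_, by abel⟩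
        rw [Set.mem_smul_set]
        set t' : ℝ := (-β - 1/2) / (1 - 2*γ) + 1/2 with ht'
        set u : Fin d → ℝ := fun i => (Int.fract (β * (n i : ℝ)) - 1/2) / (1 - 2*γ) + 1/2
          with hu
        set z : Fin d → ℝ := fun i => t' * (n i : ℝ) + u i with hz'
        have hzZ : z ∈ Z := by
          refine mem_Z n Z hZ z t' (fun i => ?_)
          have h3 : -(1/2 - γ) ≤ Int.fract (β * (n i : ℝ)) - 1/2 := by linarith [(hfr i).1]
          have h4 : Int.fract (β * (n i : ℝ)) - 1/2 ≤ 1/2 - γ := by linarith [(hfr i).2]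
          have h5 : (Int.fract (β * (n i : ℝ)) - 1/2) / (1 - 2*γ) ≤ 1/2 := by
            rw [div_le_iff₀ h2]; linarith
          have h6 : -(1/2 : ℝ) ≤ (Int.fract (β * (n i : ℝ)) - 1/2) / (1 - 2*γ) := by
            rw [le_div_iff₀ h2]; linarith
          constructor <;> simp only [hz', hu] <;> linarith
        refine ⟨z - c, Set.sub_mem_sub hzZ rfl, ?_⟩
        funext i
        have hne : (1 - 2*γ) ≠ 0 := ne_of_gt h2
        have harith : ∀ F NN : ℝ,
            (1 - 2*γ) * ((((-β - 1/2) / (1 - 2*γ) + 1/2) * NN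
              + ((F - 1/2) / (1 - 2*γ) + 1/2)) - (1 + NN)/2)
            = (F - β * NN) - (1 + NN)/2 := by
          intro F NN
          field_simp
          ring
        simp only [Pi.smul_apply, Pi.sub_apply, smul_eq_mul, hw, hz', hu, ht', hc]
        linear_combination harith (Int.fract (β * ((n i : ℤ) : ℝ))) ((n i : ℤ) : ℝ)
    · -- γ = 1/2
      have hhalf : ∀ i, Int.fract (β * (n i : ℝ)) = 1/2 := by
        intro i
        have h1 := (fract_bounds (hβ i)).1
        have h2 := (fract_bounds (hβ i)).2
        linarith
      have hint : ∀ i, ∃ z : ℤ, (2*β) * (n i : ℝ) = z := by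
        intro i
        refine ⟨2 * ⌊β * (n i : ℝ)⌋ + 1, ?_⟩
        have := hhalf i
        rw [Int.fract] at this
        push_cast
        linarith
      obtain ⟨m, hm⟩ := bezout_aux n (2*β) hint Finset.univ
      rw [hgcd] at hm
      norm_num at hm
      -- 2*β = m, and m * n i is odd for each i, so n i is odd
      have hodd : ∀ i, Odd (n i) := by
        intro i
        obtain ⟨z, hzi⟩ := hint i
        have hz : z = 2 * ⌊β * (n i : ℝ)⌋ + 1 := by
          obtain ⟨z', hz'⟩ : ∃ z' : ℤ, (2*β) * (n i : ℝ) = z' :=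
            ⟨2 * ⌊β * (n i : ℝ)⌋ + 1, by
              have := hhalf i
              rw [Int.fract] at this
              push_cast
              linarith⟩
          have : (z : ℝ) = ((2 * ⌊β * (n i : ℝ)⌋ + 1 : ℤ) : ℝ) := by
            rw [← hzi]
            have := hhalf i
            rw [Int.fract] at this
            push_cast
            linarith
          exact_mod_cast this
        have hmn : m * n i = z := by
          have : ((m * n i : ℤ) : ℝ) = (z : ℝ) := by push_cast; rw [← hzi, hm]
          exact_mod_cast this
        have hzodd : Odd z := by rw [hz]; exact ⟨⌊β * (n i : ℝ)⌋, by ring⟩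
        rw [← hmn] at hzodd
        exact (Int.odd_mul.mp hzodd).2
      refine ⟨c, ?_, ?_, ?_⟩
      · refine mem_interior_Z n Z hZ c (1/2) (fun i => ?_)
        have hci : c i - 1/2 * (n i : ℝ) = 1/2 := by simp only [hc]; ring
        constructor <;> rw [hci] <;> norm_num
      · intro i
        obtain ⟨k, hk⟩ := hodd i
        refine ⟨k + 1, ?_⟩
        simp only [hc]
        rw [hk]
        push_cast
        ring
      · rw [Set.mem_add]
        refine ⟨c, rfl, (1 - 2*γ) • (c - c), ?_, by simp⟩
        rw [Set.mem_smul_set]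
        refine ⟨c - c, Set.sub_mem_sub ?_ rfl, rfl⟩
        refine mem_Z n Z hZ c (1/2) (fun i => ?_)
        have hci : c i - 1/2 * (n i : ℝ) = 1/2 := by simp only [hc]; ring
        constructor <;> rw [hci] <;> norm_num
  · rintro ⟨w, _, hlat, hmem⟩
    rw [Set.mem_add] at hmem
    obtain ⟨a, ha, b, hb, hab⟩ := hmem
    rw [Set.mem_singleton_iff] at ha
    rw [ha] at hab
    rw [Set.mem_smul_set] at hb
    obtain ⟨y, hy, hby⟩ := hb
    rw [Set.mem_sub] at hy
    obtain ⟨z, hz, c', hc', hzc⟩ := hy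
    rw [Set.mem_singleton_iff] at hc'
    rw [hc'] at hzc
    rw [hZ, Set.mem_add] at hz
    obtain ⟨p, ⟨t, ht⟩, u, hu, hpu⟩ := hz
    rw [Set.mem_Icc] at hu
    refine ⟨-((1 - 2*γ) * t + γ), fun i => ?_⟩
    obtain ⟨k, hk⟩ := hlat i
    have hwi : w i = c i + (1 - 2*γ) * (t * (n i : ℝ) + u i - c i) := by
      have := congrFun hab i
      rw [← hby, ← hzc, ← hpu, ← ht] at this
      simp only [Pi.add_apply, Pi.smul_apply, Pi.sub_apply, smul_eq_mul] at this
      linarith [this]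
    have hui : 0 ≤ u i ∧ u i ≤ 1 := ⟨hu.1 i, hu.2 i⟩
    have key : -((1 - 2*γ) * t + γ) * (n i : ℝ) + (k : ℝ) = (1 - 2*γ) * u i + γ := by
      rw [← hk, hwi]
      simp only [hc]
      ring
    have : γ ≤ distToInt (-((1 - 2*γ) * t + γ) * (n i : ℝ) + (k : ℝ)) := by
      rw [key]
      refine distToInt_ge hγ0 (by nlinarith [hui.1]) (by nlinarith [hui.2])
    rwa [distToInt_add_int] at this
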